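/- arXiv:1307.2105 — 5 statements merged into one kernel-verified Lean document; each statement's English description precedes it below -/
import Mathlib

section
/- Let SNR > 0, let H ∈ ℝ^{N×M}, and let A ∈ ℝ^{M×M} be any real matrix. The matrix SNR⁻¹·I_N + H·Hᵀ is positive definite, hence invertible, and for the filter B = A·Hᵀ·(SNR⁻¹·I_N + H·Hᵀ)⁻¹ one has the identity SNR·(B·H − A)·(B·H − A)ᵀ + B·Bᵀ = SNR·A·(I_M + SNR·Hᵀ·H)⁻¹·Aᵀ. -/
theorem mmse_filter_identity {M N : ℕ} (SNR : ℝ) (hSNR : 0 < SNR)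
    (H : Matrix (Fin N) (Fin M) ℝ) (A : Matrix (Fin M) (Fin M) ℝ) :
    (SNR⁻¹ • (1 : Matrix (Fin N) (Fin N) ℝ) + H * H.transpose).PosDef ∧
    IsUnit (SNR⁻¹ • (1 : Matrix (Fin N) (Fin N) ℝ) + H * H.transpose) ∧
    (letI B := A * H.transpose * (SNR⁻¹ • (1 : Matrix (Fin N) (Fin N) ℝ) + H * H.transpose)⁻¹
     SNR • ((B * H - A) * (B * H - A).transpose) + B * B.transpose
       = SNR • (A * ((1 : Matrix (Fin M) (Fin M) ℝ) + SNR • (H.transpose * H))⁻¹ * A.transpose)) := by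
  set S : Matrix (Fin N) (Fin N) ℝ := SNR⁻¹ • (1 : Matrix (Fin N) (Fin N) ℝ) + H * H.transpose
    with hSdef
  set T : Matrix (Fin M) (Fin M) ℝ := (1 : Matrix (Fin M) (Fin M) ℝ) + SNR • (H.transpose * H)
    with hTdef
  have hHt : H.transpose = H.conjTranspose := by
    ext i j; simp [Matrix.conjTranspose_apply]
  have hSpd : S.PosDef := by
    have h1 : (SNR⁻¹ • (1 : Matrix (Fin N) (Fin N) ℝ)).PosDef := by
      rw [Matrix.smul_one_eq_diagonal]
      exact Matrix.posDef_diagonal_iff.2 fun _ => inv_pos.2 hSNR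
    have h2 : (H * H.transpose).PosSemidef := by
      rw [hHt]; exact Matrix.posSemidef_self_mul_conjTranspose H
    exact h1.add_posSemidef h2
  have hTpd : T.PosDef := by
    have h2 : (SNR • (H.transpose * H)).PosSemidef := by
      have heq : SNR • (H.transpose * H)
          = (Real.sqrt SNR • H).conjTranspose * (Real.sqrt SNR • H) := by
        rw [Matrix.conjTranspose_smul, Matrix.smul_mul, Matrix.mul_smul, smul_smul, ← hHt]
        simp [Real.mul_self_sqrt hSNR.le]
      rw [heq]
      exact Matrix.posSemidef_conjTranspose_mul_self _
    exact Matrix.PosDef.one.add_posSemidef h2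
  have hSu : IsUnit S.det := (Matrix.isUnit_iff_isUnit_det S).1 hSpd.isUnit
  have hTu : IsUnit T.det := (Matrix.isUnit_iff_isUnit_det T).1 hTpd.isUnit
  have hinv : T⁻¹ * T = 1 := Matrix.nonsing_inv_mul T hTu
  have hinv' : T * T⁻¹ = 1 := Matrix.mul_nonsing_inv T hTu
  refine ⟨hSpd, hSpd.isUnit, ?_⟩
  -- key: T * Hᵀ = SNR • (Hᵀ * S)
  have hkey : T * H.transpose = SNR • (H.transpose * S) := by
    rw [hSdef, hTdef]
    rw [Matrix.mul_add, Matrix.mul_smul, Matrix.mul_one, smul_add, smul_smul,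
      mul_inv_cancel₀ hSNR.ne', one_smul, Matrix.add_mul, Matrix.one_mul,
      Matrix.smul_mul, Matrix.mul_assoc]
  -- hence Hᵀ * S⁻¹ = SNR • (T⁻¹ * Hᵀ)
  have hHS : H.transpose * S⁻¹ = SNR • (T⁻¹ * H.transpose) := by
    have h1 : T⁻¹ * (T * H.transpose) * S⁻¹ = H.transpose * S⁻¹ := by
      rw [← Matrix.mul_assoc, hinv, Matrix.one_mul]
    rw [← h1, hkey, Matrix.mul_smul, Matrix.smul_mul]
    simp only [Matrix.mul_assoc]
    rw [Matrix.mul_nonsing_inv S hSu, Matrix.mul_one]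
  have hB : A * H.transpose * S⁻¹ = SNR • (A * T⁻¹ * H.transpose) := by
    rw [Matrix.mul_assoc, hHS, Matrix.mul_smul, Matrix.mul_assoc]
  rw [hB]
  have hTT : SNR • (H.transpose * H) = T - 1 := (add_sub_cancel_left 1 _).symm
  have hBH : SNR • (A * T⁻¹ * H.transpose) * H - A = -(A * T⁻¹) := by
    have h1 : SNR • (A * T⁻¹ * H.transpose) * H = A * T⁻¹ * (SNR • (H.transpose * H)) := by
      rw [Matrix.smul_mul, Matrix.mul_smul, Matrix.mul_assoc]
    rw [h1, hTT, Matrix.mul_sub, Matrix.mul_assoc, hinv, Matrix.mul_one, Matrix.mul_one]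
    abel
  rw [hBH]
  have hTsymm : T.transpose = T := by
    rw [hTdef]
    simp [Matrix.transpose_add, Matrix.transpose_smul, Matrix.transpose_mul]
  have hTinv : T⁻¹.transpose = T⁻¹ := by
    rw [Matrix.transpose_nonsing_inv, hTsymm]
  -- clear definitions; keep only algebraic facts
  clear_value T
  clear hkey hHS hB hTdef hTpd hTu hTsymm
  simp only [Matrix.transpose_neg, Matrix.neg_mul, Matrix.mul_neg, neg_neg,
    Matrix.transpose_smul, Matrix.transpose_mul, hTinv, Matrix.transpose_transpose,
    Matrix.smul_mul, Matrix.mul_smul, smul_smul, Matrix.mul_assoc]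
  have key2 : (SNR * SNR) • (A * (T⁻¹ * (H.transpose * (H * (T⁻¹ * A.transpose)))))
      = SNR • (A * (T⁻¹ * (A.transpose - T⁻¹ * A.transpose))) := by
    rw [mul_smul]
    congr 1
    rw [← Matrix.mul_smul, ← Matrix.mul_smul]
    congr 2
    rw [show H.transpose * (H * (T⁻¹ * A.transpose))
          = H.transpose * H * (T⁻¹ * A.transpose) by rw [Matrix.mul_assoc],
      ← Matrix.smul_mul, hTT, Matrix.sub_mul, Matrix.one_mul, ← Matrix.mul_assoc,
      hinv', Matrix.one_mul]
  rw [key2, ← smul_add, ← Matrix.mul_add, ← Matrix.mul_add,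
    show T⁻¹ * A.transpose + (A.transpose - T⁻¹ * A.transpose) = A.transpose by abel]
end

section
/- Let H ∈ ℝ^{N×M} and SNR > 0, let X ∈ ℝ^{M×n} and Z ∈ ℝ^{N×n} be zero-mean random matrices with generalized covariance matrices K̃_{XX} = SNR·I_M and K̃_{ZZ} = I_N and generalized cross-covariance K̃_{XZ} = 0, let A ∈ ℝ^{M×M}, set B = A·Hᵀ·(SNR⁻¹·I_N + H·Hᵀ)⁻¹, and define the effective noise Z_eff = (B·H − A)·X + B·Z. Then the generalized covariance matrix of the effective noise is K̃_{Z_eff Z_eff} = SNR·A·(I_M + SNR·Hᵀ·H)⁻¹·Aᵀ. -/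
open MeasureTheory

/-- Generalized cross-covariance matrix of two random matrices:
`{K̃_{XY}}_{ij} = (1/n) E⟨x_i, y_j⟩`. -/
noncomputable def genCrossCov {Ω : Type*} [MeasurableSpace Ω] (P : Measure Ω)
    {M N n : ℕ} (X : Ω → Matrix (Fin M) (Fin n) ℝ) (Y : Ω → Matrix (Fin N) (Fin n) ℝ) :
    Matrix (Fin M) (Fin N) ℝ :=
  Matrix.of fun i j => (n : ℝ)⁻¹ * ∫ ω, ∑ t, X ω i t * Y ω j t ∂P

lemma sum_comm' {a b : ℕ} (f : Fin a → Fin b → ℝ) :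
    ∑ k, ∑ l, f k l = ∑ l, ∑ k, f k l := Finset.sum_comm

lemma sum_mul_expand {M N n p q : ℕ} (C : Matrix (Fin p) (Fin M) ℝ) (D : Matrix (Fin q) (Fin N) ℝ)
    (Xω : Matrix (Fin M) (Fin n) ℝ) (Yω : Matrix (Fin N) (Fin n) ℝ) (i : Fin p) (j : Fin q) :
    ∑ t, (C * Xω) i t * (D * Yω) j t
      = ∑ k, ∑ l, C i k * D j l * ∑ t, Xω k t * Yω l t := by
  calc ∑ t, (C * Xω) i t * (D * Yω) j t
      = ∑ t, ∑ k, ∑ l, C i k * Xω k t * (D j l * Yω l t) := by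
        simp only [Matrix.mul_apply, Finset.sum_mul_sum]
    _ = ∑ k, ∑ t, ∑ l, C i k * Xω k t * (D j l * Yω l t) := Finset.sum_comm
    _ = ∑ k, ∑ l, ∑ t, C i k * Xω k t * (D j l * Yω l t) :=
        Finset.sum_congr rfl fun k _ => Finset.sum_comm
    _ = ∑ k, ∑ l, C i k * D j l * ∑ t, Xω k t * Yω l t := by
        refine Finset.sum_congr rfl fun k _ => Finset.sum_congr rfl fun l _ => ?_
        rw [Finset.mul_sum]
        exact Finset.sum_congr rfl fun t _ => by ring

lemma integrable_pair {Ω : Type*} [MeasurableSpace Ω] {P : Measure Ω} {M N n p q : ℕ}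
    {X : Ω → Matrix (Fin M) (Fin n) ℝ} {Y : Ω → Matrix (Fin N) (Fin n) ℝ}
    (hint : ∀ i j, Integrable (fun ω => ∑ t, X ω i t * Y ω j t) P)
    (C : Matrix (Fin p) (Fin M) ℝ) (D : Matrix (Fin q) (Fin N) ℝ) (i : Fin p) (j : Fin q) :
    Integrable (fun ω => ∑ t, (C * X ω) i t * (D * Y ω) j t) P := by
  simp_rw [sum_mul_expand]
  exact integrable_finset_sum _ fun k _ => integrable_finset_sum _ fun l _ =>
    (hint k l).const_mul _

lemma genCrossCov_mul {Ω : Type*} [MeasurableSpace Ω] (P : Measure Ω) {M N n p q : ℕ}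
    (X : Ω → Matrix (Fin M) (Fin n) ℝ) (Y : Ω → Matrix (Fin N) (Fin n) ℝ)
    (hint : ∀ i j, Integrable (fun ω => ∑ t, X ω i t * Y ω j t) P)
    (C : Matrix (Fin p) (Fin M) ℝ) (D : Matrix (Fin q) (Fin N) ℝ) :
    genCrossCov P (fun ω => C * X ω) (fun ω => D * Y ω)
      = C * genCrossCov P X Y * D.transpose := by
  ext i j
  simp only [genCrossCov, Matrix.of_apply]
  simp_rw [sum_mul_expand]
  rw [integral_finset_sum _ fun k _ => integrable_finset_sum _ fun l _ => (hint k l).const_mul _]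
  have step : ∀ k, (∫ ω, ∑ l, C i k * D j l * ∑ t, X ω k t * Y ω l t ∂P)
      = ∑ l, C i k * D j l * ∫ ω, ∑ t, X ω k t * Y ω l t ∂P := fun k => by
    rw [integral_finset_sum _ fun l _ => (hint k l).const_mul _]
    exact Finset.sum_congr rfl fun l _ => integral_const_mul _ _
  simp_rw [step]
  simp only [Matrix.mul_apply, Matrix.transpose_apply, Matrix.of_apply, Finset.sum_mul,
    Finset.mul_sum]
  rw [sum_comm']
  exact Finset.sum_congr rfl fun k _ => Finset.sum_congr rfl fun l _ => by ring

lemma genCrossCov_add {Ω : Type*} [MeasurableSpace Ω] (P : Measure Ω) {M N n : ℕ}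
    (U V : Ω → Matrix (Fin M) (Fin n) ℝ) (W S : Ω → Matrix (Fin N) (Fin n) ℝ)
    (hUW : ∀ i j, Integrable (fun ω => ∑ t, U ω i t * W ω j t) P)
    (hUS : ∀ i j, Integrable (fun ω => ∑ t, U ω i t * S ω j t) P)
    (hVW : ∀ i j, Integrable (fun ω => ∑ t, V ω i t * W ω j t) P)
    (hVS : ∀ i j, Integrable (fun ω => ∑ t, V ω i t * S ω j t) P) :
    genCrossCov P (fun ω => U ω + V ω) (fun ω => W ω + S ω)
      = genCrossCov P U W + genCrossCov P U S + genCrossCov P V W + genCrossCov P V S := by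
  ext i j
  simp only [genCrossCov, Matrix.of_apply, Matrix.add_apply]
  have key : ∀ ω, ∑ t, (U ω i t + V ω i t) * (W ω j t + S ω j t)
      = (∑ t, U ω i t * W ω j t) + (∑ t, U ω i t * S ω j t)
        + (∑ t, V ω i t * W ω j t) + (∑ t, V ω i t * S ω j t) := by
    intro ω
    rw [← Finset.sum_add_distrib, ← Finset.sum_add_distrib, ← Finset.sum_add_distrib]
    exact Finset.sum_congr rfl fun t _ => by ring
  simp_rw [key]
  have i12 : Integrable (fun ω => (∑ t, U ω i t * W ω j t) + ∑ t, U ω i t * S ω j t) P :=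
    (hUW i j).add (hUS i j)
  have i123 : Integrable
      (fun ω => ((∑ t, U ω i t * W ω j t) + ∑ t, U ω i t * S ω j t) + ∑ t, V ω i t * W ω j t) P :=
    i12.add (hVW i j)
  rw [integral_add i123 (hVS i j), integral_add i12 (hVW i j),
      integral_add (hUW i j) (hUS i j)]
  ring

theorem gencov_effective_noise
    {Ω : Type*} [MeasurableSpace Ω] (P : Measure Ω) [IsProbabilityMeasure P]
    {M N n : ℕ} (SNR : ℝ) (hSNR : 0 < SNR)
    (H : Matrix (Fin N) (Fin M) ℝ)
    (X : Ω → Matrix (Fin M) (Fin n) ℝ) (Z : Ω → Matrix (Fin N) (Fin n) ℝ)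
    -- zero mean
    (hX0 : ∀ i t, ∫ ω, X ω i t ∂P = 0) (hZ0 : ∀ j t, ∫ ω, Z ω j t ∂P = 0)
    -- integrability of all relevant products
    (hXX : ∀ i j, Integrable (fun ω => ∑ t, X ω i t * X ω j t) P)
    (hXZ : ∀ i j, Integrable (fun ω => ∑ t, X ω i t * Z ω j t) P)
    (hZZ : ∀ i j, Integrable (fun ω => ∑ t, Z ω i t * Z ω j t) P)
    -- second-order statistics
    (hKXX : genCrossCov P X X = SNR • (1 : Matrix (Fin M) (Fin M) ℝ))
    (hKZZ : genCrossCov P Z Z = (1 : Matrix (Fin N) (Fin N) ℝ))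
    (hKXZ : genCrossCov P X Z = 0)
    (A : Matrix (Fin M) (Fin M) ℝ)
    (B : Matrix (Fin M) (Fin N) ℝ)
    (hB : B = A * H.transpose * (SNR⁻¹ • (1 : Matrix (Fin N) (Fin N) ℝ) + H * H.transpose)⁻¹)
    (Zeff : Ω → Matrix (Fin M) (Fin n) ℝ)
    (hZeff : ∀ ω, Zeff ω = (B * H - A) * X ω + B * Z ω) :
    genCrossCov P Zeff Zeff
      = SNR • (A * ((1 : Matrix (Fin M) (Fin M) ℝ) + SNR • (H.transpose * H))⁻¹ * A.transpose) := by
  have hSne : SNR ≠ 0 := hSNR.ne'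
  have hZXint : ∀ i j, Integrable (fun ω => ∑ t, Z ω i t * X ω j t) P := fun i j =>
    (hXZ j i).congr (Filter.Eventually.of_forall fun ω =>
      Finset.sum_congr rfl fun t _ => mul_comm _ _)
  have hZX : genCrossCov P Z X = (genCrossCov P X Z).transpose := by
    ext i j
    simp only [genCrossCov, Matrix.of_apply, Matrix.transpose_apply]
    congr 1
    refine integral_congr_ae (Filter.Eventually.of_forall fun ω => ?_)
    exact Finset.sum_congr rfl fun t _ => mul_comm _ _
  set C : Matrix (Fin M) (Fin M) ℝ := B * H - A with hC
  have hZeff' : Zeff = fun ω => C * X ω + B * Z ω := funext hZeff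
  rw [hZeff',
    genCrossCov_add P (fun ω => C * X ω) (fun ω => B * Z ω) (fun ω => C * X ω) (fun ω => B * Z ω)
      (integrable_pair hXX C C) (integrable_pair hXZ C B)
      (integrable_pair hZXint B C) (integrable_pair hZZ B B),
    genCrossCov_mul P X X hXX C C, genCrossCov_mul P X Z hXZ C B,
    genCrossCov_mul P Z X hZXint B C, genCrossCov_mul P Z Z hZZ B B,
    hKXX, hKZZ, hKXZ, hZX, hKXZ]
  simp only [Matrix.mul_zero, Matrix.zero_mul, Matrix.transpose_zero, add_zero, zero_add,
    Matrix.mul_one, Matrix.mul_smul, Matrix.smul_mul]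
  -- pure matrix algebra from here
  set S : Matrix (Fin M) (Fin M) ℝ := SNR⁻¹ • (1 : Matrix (Fin M) (Fin M) ℝ) + H.transpose * H
    with hS
  set T : Matrix (Fin N) (Fin N) ℝ := SNR⁻¹ • (1 : Matrix (Fin N) (Fin N) ℝ) + H * H.transpose
    with hT
  set Q : Matrix (Fin M) (Fin M) ℝ := (1 : Matrix (Fin M) (Fin M) ℝ) + SNR • (H.transpose * H)
    with hQ
  have hHtH : (H.transpose * H).PosSemidef := by
    have := Matrix.posSemidef_conjTranspose_mul_self H
    rwa [Matrix.conjTranspose_eq_transpose_of_trivial] at this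
  have hHHt : (H * H.transpose).PosSemidef := by
    have := Matrix.posSemidef_conjTranspose_mul_self H.transpose
    rwa [Matrix.conjTranspose_eq_transpose_of_trivial, Matrix.transpose_transpose] at this
  have hSpos : S.PosDef := by
    refine Matrix.PosDef.add_posSemidef ?_ hHtH
    rw [Matrix.smul_one_eq_diagonal]
    exact Matrix.PosDef.diagonal fun _ => by positivity
  have hTpos : T.PosDef := by
    refine Matrix.PosDef.add_posSemidef ?_ hHHt
    rw [Matrix.smul_one_eq_diagonal]
    exact Matrix.PosDef.diagonal fun _ => by positivity
  have hSdet : IsUnit S.det := hSpos.det_pos.ne'.isUnit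
  have hTdet : IsUnit T.det := hTpos.det_pos.ne'.isUnit
  have hQS : Q = SNR • S := by
    rw [hQ, hS, smul_add, smul_smul, mul_inv_cancel₀ hSne, one_smul]
  have hSsymm : S.transpose = S := by
    rw [hS]
    simp [Matrix.transpose_add, Matrix.transpose_smul, Matrix.transpose_mul,
      Matrix.transpose_transpose]
  have hSinv : (S⁻¹).transpose = S⁻¹ := by
    rw [Matrix.transpose_nonsing_inv, hSsymm]
  have hQinv : Q⁻¹ = SNR⁻¹ • S⁻¹ := by
    refine Matrix.inv_eq_right_inv ?_
    rw [hQS, Matrix.smul_mul, Matrix.mul_smul, smul_smul, mul_inv_cancel₀ hSne, one_smul,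
      Matrix.mul_nonsing_inv S hSdet]
  have h1 : S * H.transpose = H.transpose * T := by
    rw [hS, hT, Matrix.add_mul, Matrix.mul_add, Matrix.smul_mul, Matrix.mul_smul,
      Matrix.one_mul, Matrix.mul_one, Matrix.mul_assoc]
  have h2 : H.transpose * T⁻¹ = S⁻¹ * H.transpose := by
    have e : H.transpose = S⁻¹ * (H.transpose * T) := by
      rw [← h1, ← Matrix.mul_assoc, Matrix.nonsing_inv_mul S hSdet, Matrix.one_mul]
    calc H.transpose * T⁻¹ = S⁻¹ * (H.transpose * T) * T⁻¹ := by rw [← e]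
      _ = S⁻¹ * H.transpose * (T * T⁻¹) := by simp only [Matrix.mul_assoc]
      _ = S⁻¹ * H.transpose := by rw [Matrix.mul_nonsing_inv T hTdet, Matrix.mul_one]
  have hBeq : B = A * (S⁻¹ * H.transpose) := by
    rw [hB, Matrix.mul_assoc, h2]
  have hHtHS : H.transpose * H = S - SNR⁻¹ • (1 : Matrix (Fin M) (Fin M) ℝ) := by
    rw [hS]; abel
  have hCeq : C = (-SNR⁻¹) • (A * S⁻¹) := by
    have hBH : B * H = A * (S⁻¹ * (H.transpose * H)) := by
      rw [hBeq]; simp only [Matrix.mul_assoc]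
    rw [hC, hBH, hHtHS]
    simp only [Matrix.mul_sub, Matrix.nonsing_inv_mul S hSdet, Matrix.mul_smul, Matrix.mul_one,
      neg_smul]
    abel
  -- final algebra
  have cancel : S * (S⁻¹ * A.transpose) = A.transpose := by
    rw [← Matrix.mul_assoc, Matrix.mul_nonsing_inv S hSdet, Matrix.one_mul]
  have key : SNR⁻¹ • (A * (S⁻¹ * (S⁻¹ * A.transpose)))
      + A * (S⁻¹ * (H.transpose * (H * (S⁻¹ * A.transpose))))
      = A * (S⁻¹ * A.transpose) := by
    have expand : SNR⁻¹ • (S⁻¹ * A.transpose) + H.transpose * (H * (S⁻¹ * A.transpose))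
        = S * (S⁻¹ * A.transpose) := by
      rw [hS, Matrix.add_mul, Matrix.smul_mul, Matrix.one_mul, Matrix.mul_assoc]
    calc SNR⁻¹ • (A * (S⁻¹ * (S⁻¹ * A.transpose)))
        + A * (S⁻¹ * (H.transpose * (H * (S⁻¹ * A.transpose))))
        = A * (S⁻¹ * (SNR⁻¹ • (S⁻¹ * A.transpose)
            + H.transpose * (H * (S⁻¹ * A.transpose)))) := by
          rw [Matrix.mul_add, Matrix.mul_add, Matrix.mul_smul, Matrix.mul_smul]
      _ = A * (S⁻¹ * A.transpose) := by rw [expand, cancel]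
  rw [hCeq, hBeq, hQinv]
  simp only [Matrix.transpose_smul, Matrix.transpose_mul, hSinv, Matrix.smul_mul,
    Matrix.mul_smul, smul_smul, neg_mul, mul_neg, neg_neg, Matrix.mul_assoc,
    Matrix.transpose_transpose]
  rw [show SNR * (SNR⁻¹ * SNR⁻¹) = SNR⁻¹ by field_simp,
      show SNR * SNR⁻¹ = 1 from mul_inv_cancel₀ hSne, one_smul]
  exact key
end

section
/- Let SNR > 0, H ∈ ℝ^{N×M}, and let A ∈ ℤ^{M×M} be a full-rank integer matrix. Let A·(I_M + SNR·Hᵀ·H)⁻¹·Aᵀ = L·Lᵀ be the Cholesky decomposition, with L lower triangular having strictly positive diagonal entries ℓ_11,…,ℓ_MM. Then ∑_{m=1}^{M} −(1/2)·log₂(ℓ_mm²) = (1/2)·log₂ det(I_M + SNR·Hᵀ·H) − log₂|det(A)|. In particular, if A is unimodular (|det A| = 1), the sum of the per-stream successive integer-forcing rates equals the white-input mutual information C_WI. -/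
open Matrix

theorem successive_if_sum_rate {M N : ℕ}
    (SNR : ℝ) (hSNR : 0 < SNR)
    (H : Matrix (Fin N) (Fin M) ℝ)
    (A : Matrix (Fin M) (Fin M) ℤ) (hA : A.det ≠ 0)
    (L : Matrix (Fin M) (Fin M) ℝ)
    (hLtri : ∀ i j : Fin M, i < j → L i j = 0)
    (hLdiag : ∀ i : Fin M, 0 < L i i)
    (hchol : (A.map (Int.cast : ℤ → ℝ))
        * ((1 : Matrix (Fin M) (Fin M) ℝ) + SNR • (H.transpose * H))⁻¹
        * (A.map (Int.cast : ℤ → ℝ)).transpose = L * L.transpose) :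
    (∑ m : Fin M, -(1/2 : ℝ) * Real.logb 2 ((L m m)^2)
      = (1/2 : ℝ) * Real.logb 2
          ((1 : Matrix (Fin M) (Fin M) ℝ) + SNR • (H.transpose * H)).det
        - Real.logb 2 |(A.det : ℝ)|) ∧
    (|(A.det : ℝ)| = 1 →
      ∑ m : Fin M, -(1/2 : ℝ) * Real.logb 2 ((L m m)^2)
        = (1/2 : ℝ) * Real.logb 2
            ((1 : Matrix (Fin M) (Fin M) ℝ) + SNR • (H.transpose * H)).det) := by
  set S : Matrix (Fin M) (Fin M) ℝ := (1 : Matrix (Fin M) (Fin M) ℝ) + SNR • (H.transpose * H) with hSdef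
  -- S is positive definite
  have h1 : (1 : Matrix (Fin M) (Fin M) ℝ).PosDef := by
    exact Matrix.PosDef.one
  have hpsd : (SNR • (H.transpose * H)).PosSemidef := by
    have := posSemidef_conjTranspose_mul_self (Real.sqrt SNR • H)
    rwa [conjTranspose_eq_transpose_of_trivial, transpose_smul, Matrix.smul_mul,
      Matrix.mul_smul, smul_smul, Real.mul_self_sqrt hSNR.le] at this
  have hS : S.PosDef := h1.add_posSemidef hpsd
  have hdetS : 0 < S.det := hS.det_pos
  have hdA : (A.det : ℝ) ≠ 0 := Int.cast_ne_zero.mpr hA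
  -- determinant of A.map cast
  have hAd : (A.map (Int.cast : ℤ → ℝ)).det = (A.det : ℝ) :=
    (RingHom.map_det (Int.castRingHom ℝ) A).symm
  -- product of diagonal
  set P : ℝ := ∏ m : Fin M, L m m with hPdef
  have hP : 0 < P := Finset.prod_pos fun i _ => hLdiag i
  have hLdet : L.det = P := det_of_lowerTriangular L (by
    intro i j hij
    exact hLtri i j (by simpa using hij))
  -- take determinants in hchol
  have hdet : (A.det : ℝ) * (S.det)⁻¹ * (A.det : ℝ) = P ^ 2 := by
    have := congrArg Matrix.det hchol
    rwa [det_mul, det_mul, det_mul, det_transpose, det_transpose, hAd, det_nonsing_inv,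
      Ring.inverse_eq_inv, hLdet, ← sq] at this
  have key : P ^ 2 = (A.det : ℝ) ^ 2 / S.det := by
    rw [← hdet]; field_simp
  -- sum of logs
  have hsum : ∑ m : Fin M, -(1/2 : ℝ) * Real.logb 2 ((L m m)^2)
      = -(1/2 : ℝ) * Real.logb 2 (P ^ 2) := by
    rw [← Finset.mul_sum]
    congr 1
    rw [hPdef, ← Finset.prod_pow]
    exact (Real.logb_prod _ _ fun i _ => pow_ne_zero 2 (hLdiag i).ne').symm
  have main : ∑ m : Fin M, -(1/2 : ℝ) * Real.logb 2 ((L m m)^2)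
      = (1/2 : ℝ) * Real.logb 2 S.det - Real.logb 2 |(A.det : ℝ)| := by
    rw [hsum, key, Real.logb_div (pow_ne_zero 2 hdA) hdetS.ne', ← sq_abs,
      Real.logb_pow]
    ring
  exact ⟨main, fun h => by rw [main, h, Real.logb_one, sub_zero]⟩
end

section
/- Let SNR > 0, H ∈ ℝ^{N×M}, let (I_M + SNR·Hᵀ·H)⁻¹ = G·Gᵀ be the Cholesky decomposition (G lower triangular with positive diagonal), and let Λ(Gᵀ) = {Gᵀ·z : z ∈ ℤ^M}. Suppose A ∈ ℤ^{M×M} is unimodular and the columns f_1,…,f_M of F = Gᵀ·Aᵀ form a Korkin–Zolotarev reduced basis of Λ(Gᵀ), i.e. for every i = 1,…,M: (i) P_i(f_i) is a shortest nonzero vector in P_i(Λ(Gᵀ)) — that is, for every z ∈ ℤ^M with P_i(Gᵀz) ≠ 0 one has ‖P_i(f_i)‖ ≤ ‖P_i(Gᵀz)‖ — and (ii) the Gram–Schmidt coefficients satisfy |f_jᵀ·f_i*| / ‖f_i*‖² ≤ 1/2 for all j > i, where P_i denotes orthogonal projection onto the orthogonal complement of span(f_1,…,f_{i−1}) and f_i*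 = P_i(f_i). Then A is an optimal integer matrix for successive integer-forcing: for every full-rank integer matrix Ã ∈ ℤ^{M×M}, max_{k=1,…,M} ℓ_kk(A)² ≤ max_{k=1,…,M} ℓ_kk(Ã)², where for a full-rank integer matrix B, ℓ_kk(B) denote the diagonal entries of the lower-triangular Cholesky factor of B·(I_M + SNR·Hᵀ·H)⁻¹·Bᵀ. -/
open RealInnerProductSpace

noncomputable def toE {M : ℕ} (v : Fin M → ℝ) : EuclideanSpace ℝ (Fin M) :=
  (EuclideanSpace.equiv (Fin M) ℝ).symm v

noncomputable def projPerp {M : ℕ} (f : Fin M → EuclideanSpace ℝ (Fin M)) (i : Fin M)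
    (x : EuclideanSpace ℝ (Fin M)) : EuclideanSpace ℝ (Fin M) :=
  (Submodule.orthogonalProjectionOnto (Submodule.span ℝ (f '' {j | j < i}))ᗮ x : EuclideanSpace ℝ (Fin M))

lemma toE_apply {M : ℕ} (v : Fin M → ℝ) (x : Fin M) : toE v x = v x := rfl

lemma sumE_apply {M : ℕ} (s : Finset (Fin M)) (g : Fin M → EuclideanSpace ℝ (Fin M)) (x : Fin M) :
    (∑ t ∈ s, g t) x = ∑ t ∈ s, g t x := by
  induction s using Finset.induction with
  | empty => rfl
  | @insert a s h ih => rw [Finset.sum_insert h, Finset.sum_insert h, ← ih] ; rfl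

lemma rowE_mul {M : ℕ} (P Q : Matrix (Fin M) (Fin M) ℝ) (i : Fin M) :
    toE (fun x => (P * Q) i x) = ∑ t, P i t • toE (fun x => Q t x) := by
  ext x
  rw [sumE_apply]
  simp [toE, Matrix.mul_apply]

lemma innerE {M : ℕ} (u v : EuclideanSpace ℝ (Fin M)) : ⟪u, v⟫ = ∑ t, u t * v t := by
  simp [PiLp.inner_apply, RCLike.inner_apply, mul_comm]

lemma lower_det_isUnit {M : ℕ} (L : Matrix (Fin M) (Fin M) ℝ)
    (hLtri : ∀ a b : Fin M, a < b → L a b = 0) (hLdiag : ∀ a : Fin M, 0 < L a a) :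
    IsUnit L.det := by
  have h : L.BlockTriangular OrderDual.toDual := fun i j hij => hLtri i j hij
  rw [Matrix.det_of_lowerTriangular L h]
  exact (Finset.prod_pos (fun i _ => hLdiag i)).ne'.isUnit

/-- Main structural lemma: diagonal of the Cholesky factor equals Gram–Schmidt norms,
and the rows span everything. -/
lemma chol_diag {M : ℕ} (F L : Matrix (Fin M) (Fin M) ℝ)
    (hLtri : ∀ a b : Fin M, a < b → L a b = 0) (hLdiag : ∀ a : Fin M, 0 < L a a)
    (hFF : F * F.transpose = L * L.transpose)
    (f : Fin M → EuclideanSpace ℝ (Fin M)) (hf : ∀ i, f i = toE (fun x => F i x)) :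
    (∀ k, ‖projPerp f k (f k)‖ = L k k) ∧
      Submodule.span ℝ (Set.range f) = ⊤ := by
  have hdetL : IsUnit L.det := lower_det_isUnit L hLtri hLdiag
  have : Invertible L := L.invertibleOfIsUnitDet hdetL
  set Q := L⁻¹ * F with hQ
  have hFLQ : F = L * Q := (Matrix.mul_inv_cancel_left_of_invertible L F).symm
  have hQQ : Q * Q.transpose = 1 := by
    have h1 : Q * Q.transpose = L⁻¹ * (L * L.transpose) * (L.transpose)⁻¹ := by
      rw [← hFF, hQ, Matrix.transpose_mul, Matrix.transpose_nonsing_inv]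
      noncomm_ring
    rw [h1, ← Matrix.mul_assoc, Matrix.nonsing_inv_mul L hdetL,
      Matrix.one_mul, Matrix.mul_nonsing_inv L.transpose (by rwa [Matrix.det_transpose])]
  set q : Fin M → EuclideanSpace ℝ (Fin M) := fun t => toE (fun x => Q t x) with hq
  have honq : Orthonormal ℝ q := by
    rw [orthonormal_iff_ite]
    intro i j
    have h1 : (Q * Q.transpose) i j = (1 : Matrix (Fin M) (Fin M) ℝ) i j := by rw [hQQ]
    rw [Matrix.mul_apply, Matrix.one_apply] at h1
    rw [innerE]
    simpa [Matrix.transpose_apply, hq, toE_apply] using h1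
  have hLinv : ∀ a b : Fin M, a < b → L⁻¹ a b = 0 := by
    have h : L.BlockTriangular OrderDual.toDual := fun i j hij => hLtri i j hij
    have := Matrix.blockTriangular_inv_of_blockTriangular h
    exact fun a b hab => this hab
  have hfq : ∀ i, f i = ∑ t, L i t • q t := by
    intro i
    rw [hf i]
    conv_lhs => rw [hFLQ]
    exact rowE_mul L Q i
  have hqf : ∀ i, q i = ∑ t, L⁻¹ i t • f t := by
    intro i
    have : q i = toE (fun x => (L⁻¹ * F) i x) := rfl
    rw [this, rowE_mul]
    exact Finset.sum_congr rfl fun t _ => by rw [hf t]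
  have hspan : ∀ k : Fin M, Submodule.span ℝ (f '' {j | j < k})
      = Submodule.span ℝ (q '' {j | j < k}) := by
    intro k
    apply le_antisymm
    · rw [Submodule.span_le]
      rintro _ ⟨j, hj, rfl⟩
      rw [hfq j]
      apply Submodule.sum_mem
      intro t _
      by_cases ht : t < k
      · exact Submodule.smul_mem _ _ (Submodule.subset_span ⟨t, ht, rfl⟩)
      · have : j < t := lt_of_lt_of_le hj (not_lt.mp ht)
        rw [hLtri j t this, zero_smul]
        exact Submodule.zero_mem _
    · rw [Submodule.span_le]
      rintro _ ⟨j, hj, rfl⟩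
      rw [hqf j]
      apply Submodule.sum_mem
      intro t _
      by_cases ht : t < k
      · exact Submodule.smul_mem _ _ (Submodule.subset_span ⟨t, ht, rfl⟩)
      · have : j < t := lt_of_lt_of_le hj (not_lt.mp ht)
        rw [hLinv j t this, zero_smul]
        exact Submodule.zero_mem _
  constructor
  · intro k
    have hqk_orth : q k ∈ (Submodule.span ℝ (f '' {j | j < k}))ᗮ := by
      rw [hspan k, Submodule.mem_orthogonal]
      intro u hu
      refine Submodule.span_induction ?_ (by simp) (fun a b _ _ ha hb => by
        rw [inner_add_left, ha, hb, add_zero]) (fun c a _ ha => by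
        rw [inner_smul_left, ha, mul_zero]) hu
      rintro _ ⟨j, hj, rfl⟩
      have hne : j ≠ k := ne_of_lt hj
      have := honq.2 hne
      simpa using this
    have hsum : f k = (∑ t ∈ Finset.Iio k, L k t • q t) + L k k • q k := by
      rw [hfq k]
      have h1 : ∑ t, L k t • q t = ∑ t ∈ Finset.Iic k, L k t • q t := by
        refine (Finset.sum_subset (Finset.subset_univ _) ?_).symm
        intro t _ ht
        have : k < t := by simpa using ht
        rw [hLtri k t this, zero_smul]
      rw [h1, ← Finset.Iio_insert, Finset.sum_insert (by simp)]
      rw [add_comm]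
    have hv : (∑ t ∈ Finset.Iio k, L k t • q t) ∈ Submodule.span ℝ (f '' {j | j < k}) := by
      rw [hspan k]
      apply Submodule.sum_mem
      intro t ht
      exact Submodule.smul_mem _ _
        (Submodule.subset_span ⟨t, by simpa using ht, rfl⟩)
    have hproj : projPerp f k (f k) = L k k • q k := by
      unfold projPerp
      rw [hsum, map_add]
      have h0 : Submodule.orthogonalProjectionOnto (Submodule.span ℝ (f '' {j | j < k}))ᗮ
          (∑ t ∈ Finset.Iio k, L k t • q t) = 0 :=
        Submodule.orthogonalProjectionOnto_apply_of_mem_orthogonal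
          ((Submodule.span ℝ (f '' {j | j < k})).le_orthogonal_orthogonal hv)
      have h1 : (Submodule.orthogonalProjectionOnto (Submodule.span ℝ (f '' {j | j < k}))ᗮ (L k k • q k)
          : EuclideanSpace ℝ (Fin M)) = L k k • q k :=
        by rw [← Submodule.starProjection_apply]; exact Submodule.starProjection_eq_self_iff.mpr (Submodule.smul_mem _ _ hqk_orth)
      rw [h0]
      simpa using h1
    rw [hproj, norm_smul, honq.1 k]
    simp [abs_of_pos (hLdiag k)]
  · rw [eq_top_iff]
    intro x _
    have hdetF : IsUnit F.det := by
      have hdq : IsUnit Q.det := by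
        refine IsUnit.of_mul_eq_one Q.transpose.det ?_
        rw [← Matrix.det_mul, hQQ, Matrix.det_one]
      rw [hFLQ, Matrix.det_mul]
      exact hdetL.mul hdq
    set c : Fin M → ℝ := Matrix.vecMul (fun t => x t) F⁻¹ with hc
    have hx : x = ∑ t, c t • f t := by
      ext j
      rw [sumE_apply]
      have h2 : Matrix.vecMul c F = fun t => x t := by
        rw [hc, Matrix.vecMul_vecMul, Matrix.nonsing_inv_mul F hdetF, Matrix.vecMul_one]
      have h3 := congrFun h2 j
      rw [Matrix.vecMul, dotProduct] at h3
      rw [← h3]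
      exact Finset.sum_congr rfl fun t _ => by rw [hf t]; simp [toE]
    rw [hx]
    exact Submodule.sum_mem _ fun t _ =>
      Submodule.smul_mem _ _ (Submodule.subset_span (Set.mem_range_self t))


lemma proj_orth_norm_le {M : ℕ} (W V : Submodule ℝ (EuclideanSpace ℝ (Fin M))) (hWV : W ≤ V)
    (x : EuclideanSpace ℝ (Fin M)) :
    ‖(Submodule.orthogonalProjectionOnto Vᗮ x : EuclideanSpace ℝ (Fin M))‖
      ≤ ‖(Submodule.orthogonalProjectionOnto Wᗮ x : EuclideanSpace ℝ (Fin M))‖ := by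
  have hx := W.starProjection_add_starProjection_orthogonal x
  rw [Submodule.starProjection_apply, Submodule.starProjection_apply] at hx
  have h1 : Submodule.orthogonalProjectionOnto Vᗮ x
      = Submodule.orthogonalProjectionOnto Vᗮ
        ((Submodule.orthogonalProjectionOnto Wᗮ x : EuclideanSpace ℝ (Fin M))) := by
    conv_lhs => rw [← hx]
    rw [map_add, Submodule.orthogonalProjectionOnto_apply_of_mem_orthogonal
      (V.le_orthogonal_orthogonal (hWV (Submodule.orthogonalProjectionOnto W x).2)), zero_add]
  rw [h1]
  set y : EuclideanSpace ℝ (Fin M) := (Submodule.orthogonalProjectionOnto Wᗮ x : EuclideanSpace ℝ (Fin M))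
  calc ‖(Submodule.orthogonalProjectionOnto Vᗮ y : EuclideanSpace ℝ (Fin M))‖
      = ‖Submodule.orthogonalProjectionOnto Vᗮ y‖ := by rw [Submodule.norm_coe]
    _ ≤ ‖Submodule.orthogonalProjectionOnto Vᗮ‖ * ‖y‖ := (Submodule.orthogonalProjectionOnto Vᗮ).le_opNorm y
    _ ≤ 1 * ‖y‖ := by
        exact mul_le_mul_of_nonneg_right (Submodule.orthogonalProjectionOnto_norm_le _) (norm_nonneg _)
    _ = ‖y‖ := one_mul _

theorem kz_reduced_is_optimal_for_successive_if {M N : ℕ}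
    (SNR : ℝ) (hSNR : 0 < SNR)
    (H : Matrix (Fin N) (Fin M) ℝ)
    (G : Matrix (Fin M) (Fin M) ℝ)
    (hGtri : ∀ i j : Fin M, i < j → G i j = 0)
    (hGdiag : ∀ i : Fin M, 0 < G i i)
    (hGchol : ((1 : Matrix (Fin M) (Fin M) ℝ) + SNR • (H.transpose * H))⁻¹ = G * G.transpose)
    -- A is unimodular
    (A : Matrix (Fin M) (Fin M) ℤ) (hA : A.det = 1 ∨ A.det = -1)
    -- f_i are the columns of F = Gᵀ Aᵀ, i.e. f_i = Gᵀ a_i with a_iᵀ the i-th row of A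
    (f : Fin M → EuclideanSpace ℝ (Fin M))
    (hf : ∀ i, f i = toE ((G.transpose).mulVec (fun t => ((A i t : ℤ) : ℝ))))
    -- KZ condition (i): P_i(f_i) is a shortest nonzero vector of P_i(Λ(Gᵀ))
    (hKZ1 : ∀ (i : Fin M) (z : Fin M → ℤ),
      projPerp f i (toE ((G.transpose).mulVec (fun t => (z t : ℝ)))) ≠ 0 →
      ‖projPerp f i (f i)‖ ≤ ‖projPerp f i (toE ((G.transpose).mulVec (fun t => (z t : ℝ))))‖)
    -- KZ condition (ii): the Gram–Schmidt coefficients are at most 1/2 in magnitude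
    (hKZ2 : ∀ i j : Fin M, i < j →
      |⟪f j, projPerp f i (f i)⟫| / ‖projPerp f i (f i)‖^2 ≤ 1/2)
    -- L is the Cholesky factor associated with A
    (L : Matrix (Fin M) (Fin M) ℝ)
    (hLtri : ∀ a b : Fin M, a < b → L a b = 0)
    (hLdiag : ∀ a : Fin M, 0 < L a a)
    (hLchol : (A.map (Int.cast : ℤ → ℝ))
        * ((1 : Matrix (Fin M) (Fin M) ℝ) + SNR • (H.transpose * H))⁻¹
        * (A.map (Int.cast : ℤ → ℝ)).transpose = L * L.transpose) :
    -- then A minimizes max_k ℓ_kk² over all full-rank integer matrices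
    ∀ (Atil : Matrix (Fin M) (Fin M) ℤ), Atil.det ≠ 0 →
    ∀ (Ltil : Matrix (Fin M) (Fin M) ℝ),
      (∀ a b : Fin M, a < b → Ltil a b = 0) →
      (∀ a : Fin M, 0 < Ltil a a) →
      (Atil.map (Int.cast : ℤ → ℝ))
          * ((1 : Matrix (Fin M) (Fin M) ℝ) + SNR • (H.transpose * H))⁻¹
          * (Atil.map (Int.cast : ℤ → ℝ)).transpose = Ltil * Ltil.transpose →
    ∀ k : Fin M,
      (L k k)^2 ≤ Finset.univ.sup' ⟨k, Finset.mem_univ k⟩ (fun j => (Ltil j j)^2) := by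
  intro Atil hAtil Ltil hLtri' hLdiag' hLchol' k
  classical
  rw [hGchol] at hLchol hLchol'
  set FA : Matrix (Fin M) (Fin M) ℝ := (A.map (Int.cast : ℤ → ℝ)) * G with hFA
  set FT : Matrix (Fin M) (Fin M) ℝ := (Atil.map (Int.cast : ℤ → ℝ)) * G with hFT
  have hrow : ∀ (B : Matrix (Fin M) (Fin M) ℤ) (i : Fin M),
      toE ((G.transpose).mulVec (fun t => ((B i t : ℤ) : ℝ)))
        = toE (fun x => ((B.map (Int.cast : ℤ → ℝ)) * G) i x) := by
    intro B i
    ext x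
    simp [toE, Matrix.mulVec, dotProduct, Matrix.transpose_apply, Matrix.mul_apply,
      Matrix.map_apply, mul_comm]
  have hFf : ∀ i, f i = toE (fun x => FA i x) := by
    intro i
    rw [hf i, hrow A i]
  have hFFL : FA * FA.transpose = L * L.transpose := by
    rw [hFA, Matrix.transpose_mul, ← hLchol]
    noncomm_ring
  have hFFT : FT * FT.transpose = Ltil * Ltil.transpose := by
    rw [hFT, Matrix.transpose_mul, ← hLchol']
    noncomm_ring
  obtain ⟨hLd, _⟩ := chol_diag FA L hLtri hLdiag hFFL f hFf
  set b : Fin M → EuclideanSpace ℝ (Fin M) := fun i => toE (fun x => FT i x) with hb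
  obtain ⟨hLtd, hbspan⟩ := chol_diag FT Ltil hLtri' hLdiag' hFFT b (fun i => rfl)
  have hbl : ∀ i, b i = toE ((G.transpose).mulVec (fun t => ((Atil i t : ℤ) : ℝ))) :=
    fun i => (hrow Atil i).symm
  -- the span V
  have hex : ∃ j, b j ∉ Submodule.span ℝ (f '' {j | j < k}) := by
    by_contra hcon
    push_neg at hcon
    have hle : Submodule.span ℝ (Set.range b) ≤ Submodule.span ℝ (f '' {j | j < k}) := by
      rw [Submodule.span_le]
      rintro _ ⟨j, rfl⟩
      exact hcon j
    rw [hbspan, top_le_iff] at hle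
    have himg : f '' {j | j < k} = ↑((Finset.Iio k).image f) := by
      rw [Finset.coe_image, Finset.coe_Iio]
      rfl
    have hfr : Module.finrank ℝ (Submodule.span ℝ (f '' {j | j < k})) ≤ (k : ℕ) := by
      rw [himg]
      refine le_trans (finrank_span_finset_le_card _) ?_
      exact le_trans (Finset.card_image_le) (le_of_eq (Fin.card_Iio k))
    rw [hle] at hfr
    have htop : Module.finrank ℝ (⊤ : Submodule ℝ (EuclideanSpace ℝ (Fin M))) = M := by
      rw [finrank_top]
      simp
    rw [htop] at hfr
    exact absurd hfr (not_le.mpr k.isLt)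
  -- pick minimal such j
  set T : Finset (Fin M) :=
    Finset.univ.filter (fun j => b j ∉ Submodule.span ℝ (f '' {j | j < k})) with hTdef
  have hTne : T.Nonempty := by
    obtain ⟨j, hj⟩ := hex
    exact ⟨j, by simp [hTdef, hj]⟩
  set j : Fin M := T.min' hTne with hjdef
  have hjmem : b j ∉ Submodule.span ℝ (f '' {j | j < k}) := by
    have hj : j ∈ T := T.min'_mem hTne
    simp only [hTdef, Finset.mem_filter] at hj
    exact hj.2
  have hmin : ∀ t, t < j → b t ∈ Submodule.span ℝ (f '' {j | j < k}) := by
    intro t ht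
    by_contra hc
    have : t ∈ T := by simp [hTdef, hc]
    exact absurd (T.min'_le t this) (not_le.mpr ht)
  have hWV : Submodule.span ℝ (b '' {t | t < j}) ≤ Submodule.span ℝ (f '' {j | j < k}) := by
    rw [Submodule.span_le]
    rintro _ ⟨t, ht, rfl⟩
    exact hmin t ht
  have hne : projPerp f k (toE ((G.transpose).mulVec (fun t => ((Atil j t : ℤ) : ℝ)))) ≠ 0 := by
    rw [← hbl j]
    intro h0
    apply hjmem
    unfold projPerp at h0
    rw [ZeroMemClass.coe_eq_zero, Submodule.orthogonalProjectionOnto_eq_zero_iff,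
      Submodule.orthogonal_orthogonal] at h0
    exact h0
  have hchain : L k k ≤ Ltil j j := by
    have h1 : ‖projPerp f k (f k)‖
        ≤ ‖projPerp f k (toE ((G.transpose).mulVec (fun t => ((Atil j t : ℤ) : ℝ))))‖ :=
      hKZ1 k (fun t => Atil j t) hne
    rw [← hbl j] at h1
    have h2 : ‖projPerp f k (b j)‖ ≤ ‖projPerp b j (b j)‖ :=
      proj_orth_norm_le _ _ hWV (b j)
    calc L k k = ‖projPerp f k (f k)‖ := (hLd k).symm
      _ ≤ ‖projPerp f k (b j)‖ := h1
      _ ≤ ‖projPerp b j (b j)‖ := h2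
      _ = Ltil j j := hLtd j
  have hsq : (L k k)^2 ≤ (Ltil j j)^2 :=
    pow_le_pow_left₀ (le_of_lt (hLdiag k)) hchain 2
  exact le_trans hsq (Finset.le_sup' (fun j => (Ltil j j)^2) (Finset.mem_univ j))
end

section
/- Let G ∈ ℝ^{M×M} be invertible and let A ∈ ℤ^{M×M} be a full-rank integer matrix with rows a_1ᵀ,…,a_Mᵀ, and set f_i = Gᵀ·a_i. Fix i ∈ {1,…,M} and suppose that P_i(f_i) is a shortest nonzero vector in P_i(Λ(Gᵀ)), where Λ(Gᵀ) = {Gᵀz : z ∈ ℤ^M} and P_i denotes orthogonal projection onto the orthogonal complement of span(f_1,…,f_{i−1}); i.e. for every z ∈ ℤ^M with P_i(Gᵀz) ≠ 0, ‖P_i(f_i)‖ ≤ ‖P_i(Gᵀz)‖. Then a_i minimizes the i-th diagonal Cholesky entry given the previous rows: for every a ∈ ℤ^M such that a_1,…,a_{i−1},a are linearly independent, ‖P_i(Gᵀ·a_i)‖² ≤ ‖P_i(Gᵀ·a)‖², and consequently ℓ_ii² = ‖P_i(Gᵀ·a_i)‖² ≤ ‖P_i(Gᵀ·a)‖², where ℓ_ii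 is the i-th diagonal entry of the lower-triangular Cholesky factor of A·G·Gᵀ·Aᵀ. -/
theorem shortest_projected_vector_minimizes_cholesky_diag {M : ℕ}
    (G : Matrix (Fin M) (Fin M) ℝ) (hG : IsUnit G.det)
    (A : Matrix (Fin M) (Fin M) ℤ) (hA : A.det ≠ 0)
    -- f_i = Gᵀ a_i, with a_iᵀ the i-th row of A
    (f : Fin M → EuclideanSpace ℝ (Fin M))
    (hf : ∀ i, f i = toE ((G.transpose).mulVec (fun t => ((A i t : ℤ) : ℝ))))
    (i : Fin M)
    -- P_i(f_i) is a shortest nonzero vector in P_i(Λ(Gᵀ))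
    (hshort : ∀ z : Fin M → ℤ,
      projPerp f i (toE ((G.transpose).mulVec (fun t => (z t : ℝ)))) ≠ 0 →
      ‖projPerp f i (f i)‖ ≤ ‖projPerp f i (toE ((G.transpose).mulVec (fun t => (z t : ℝ))))‖)
    -- L is the Cholesky factor of A G Gᵀ Aᵀ
    (L : Matrix (Fin M) (Fin M) ℝ)
    (hLtri : ∀ a b : Fin M, a < b → L a b = 0)
    (hLdiag : ∀ a : Fin M, 0 < L a a)
    (hchol : (A.map (Int.cast : ℤ → ℝ)) * (G * G.transpose)
        * (A.map (Int.cast : ℤ → ℝ)).transpose = L * L.transpose) :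
    -- a_i minimizes ‖P_i(Gᵀ a)‖² over integer vectors a keeping a_1,…,a_{i-1},a independent
    (∀ a : Fin M → ℤ,
      LinearIndependent ℝ (fun j : Fin (i.val + 1) =>
        if h : (j : ℕ) < i.val then (fun t => ((A ⟨j, h.trans i.isLt⟩ t : ℤ) : ℝ))
        else (fun t => ((a t : ℤ) : ℝ))) →
      ‖projPerp f i (f i)‖^2
        ≤ ‖projPerp f i (toE ((G.transpose).mulVec (fun t => (a t : ℝ))))‖^2) ∧
    -- and consequently ℓ_ii² = ‖P_i(Gᵀ a_i)‖²
    (L i i)^2 = ‖projPerp f i (f i)‖^2 := by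
    classical
  set Aℝ : Matrix (Fin M) (Fin M) ℝ := A.map (Int.cast : ℤ → ℝ) with hAR
  set eL : (Fin M → ℝ) ≃ₗ[ℝ] EuclideanSpace ℝ (Fin M) :=
    (WithLp.linearEquiv 2 ℝ (Fin M → ℝ)).symm with heL
  have htoE : ∀ v : Fin M → ℝ, toE v = eL v := fun _ => rfl
  have hinner : ∀ v w : Fin M → ℝ, (inner ℝ (toE v) (toE w) : ℝ) = ∑ t, v t * w t := by
    intro v w; simp [toE, PiLp.inner_apply, RCLike.inner_apply, mul_comm]
  set F : Matrix (Fin M) (Fin M) ℝ := Aℝ * G with hFdef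
  have hfF : ∀ j, f j = toE (F j) := by
    intro j
    rw [hf j]
    have : (G.transpose.mulVec fun t => ((A j t : ℤ) : ℝ)) = F j := by
      funext t
      simp [hFdef, Matrix.mulVec, Matrix.mul_apply, dotProduct, Matrix.transpose_apply,
        hAR, Matrix.map_apply, mul_comm]
    rw [this]
  have hFF : F * F.transpose = L * L.transpose := by
    rw [hFdef, Matrix.transpose_mul, ← hchol]
    simp [Matrix.mul_assoc]
  -- L is invertible
  have hLbt : L.BlockTriangular OrderDual.toDual := by
    intro a b h
    exact hLtri a b h
  have hLdet : IsUnit L.det := by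
    rw [Matrix.det_of_lowerTriangular L hLbt]
    exact isUnit_iff_ne_zero.2 (ne_of_gt (Finset.prod_pos fun j _ => hLdiag j))
  haveI : Invertible L := L.invertibleOfIsUnitDet hLdet
  set U : Matrix (Fin M) (Fin M) ℝ := L⁻¹ * F with hUdef
  set u : Fin M → EuclideanSpace ℝ (Fin M) := fun j => toE (U j) with hudef
  have hLU : F = L * U := by
    rw [hUdef, ← Matrix.mul_assoc, Matrix.mul_nonsing_inv L hLdet, Matrix.one_mul]
  have hUU : U * U.transpose = 1 := by
    have h1 : U * U.transpose = L⁻¹ * (L * L.transpose) * L⁻¹.transpose := by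
      rw [hUdef, ← hFF]
      simp [Matrix.transpose_mul, Matrix.mul_assoc]
    rw [h1, Matrix.transpose_nonsing_inv, ← Matrix.mul_assoc,
      Matrix.nonsing_inv_mul L hLdet, Matrix.one_mul,
      Matrix.mul_nonsing_inv _ (by rw [Matrix.det_transpose]; exact hLdet)]
  have huu : ∀ j k, (inner ℝ (u j) (u k) : ℝ) = if j = k then 1 else 0 := by
    intro j k
    rw [hudef]
    simp only []
    rw [hinner]
    have : (U * U.transpose) j k = ∑ t, U j t * U k t := by
      simp [Matrix.mul_apply, Matrix.transpose_apply]
    rw [← this, hUU, Matrix.one_apply]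
  have hLinv : ∀ a b : Fin M, a < b → L⁻¹ a b = 0 :=
    fun a b h => Matrix.blockTriangular_inv_of_blockTriangular hLbt h
  -- expansions
  have hf_sum : ∀ j, f j = ∑ s, L j s • u s := by
    intro j
    rw [hfF j, htoE]
    have : F j = ∑ s, L j s • U s := by
      funext t
      rw [hLU]
      simp [Matrix.mul_apply, Finset.sum_apply]
    rw [this, map_sum]
    simp [hudef, htoE]
  have hu_sum : ∀ j, u j = ∑ s, L⁻¹ j s • f s := by
    intro j
    rw [hudef]
    simp only []
    rw [htoE]
    have : U j = ∑ s, L⁻¹ j s • F s := by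
      funext t
      rw [hUdef]
      simp [Matrix.mul_apply, Finset.sum_apply]
    rw [this, map_sum]
    simp only [map_smul]
    congr 1
    funext s
    rw [hfF s, htoE]
  set S : Submodule ℝ (EuclideanSpace ℝ (Fin M)) := Submodule.span ℝ (f '' {j | j < i}) with hSdef
  set T : Submodule ℝ (EuclideanSpace ℝ (Fin M)) := Submodule.span ℝ (u '' {j | j < i}) with hTdef
  have hST : S = T := by
    apply le_antisymm
    · rw [hSdef, Submodule.span_le]
      rintro x ⟨j, hj, rfl⟩
      rw [hf_sum j]
      apply Submodule.sum_mem
      intro s _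
      rcases lt_or_ge j s with h | h
      · rw [hLtri j s h, zero_smul]; exact Submodule.zero_mem _
      · exact Submodule.smul_mem _ _
          (Submodule.subset_span ⟨s, lt_of_le_of_lt h hj, rfl⟩)
    · rw [hTdef, Submodule.span_le]
      rintro x ⟨j, hj, rfl⟩
      rw [hu_sum j]
      apply Submodule.sum_mem
      intro s _
      rcases lt_or_ge j s with h | h
      · rw [hLinv j s h, zero_smul]; exact Submodule.zero_mem _
      · exact Submodule.smul_mem _ _
          (Submodule.subset_span ⟨s, lt_of_le_of_lt h hj, rfl⟩)
  -- the key projection computation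
  have hq_perp : (L i i) • u i ∈ Sᗮ := by
    rw [hST, Submodule.mem_orthogonal]
    intro x hx
    refine Submodule.span_induction (p := fun x _ => (inner ℝ x ((L i i) • u i) : ℝ) = 0) ?_ ?_ ?_ ?_ hx
    · rintro y ⟨j, hj, rfl⟩
      rw [real_inner_smul_right, huu j i, if_neg (ne_of_lt hj), mul_zero]
    · simp
    · intro y z _ _ hy hz
      rw [inner_add_left, hy, hz, add_zero]
    · intro c y _ hy
      rw [real_inner_smul_left, hy, mul_zero]
  have hp_mem : f i - (L i i) • u i ∈ S := by
    have : f i - (L i i) • u i = ∑ s ∈ Finset.univ.erase i, L i s • u s := by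
      rw [hf_sum i, ← Finset.add_sum_erase _ _ (Finset.mem_univ i), add_sub_cancel_left]
    rw [this]
    apply Submodule.sum_mem
    intro s hs
    have hsne : s ≠ i := Finset.ne_of_mem_erase hs
    rcases lt_or_ge s i with h | h
    · rw [hST]
      exact Submodule.smul_mem _ _ (Submodule.subset_span ⟨s, h, rfl⟩)
    · rw [hLtri i s (lt_of_le_of_ne h (Ne.symm hsne)), zero_smul]; exact Submodule.zero_mem _
  have hproj_fi : projPerp f i (f i) = (L i i) • u i := by
    have hdecomp : f i = (f i - (L i i) • u i) + (L i i) • u i := by abel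
    show (Submodule.orthogonalProjectionOnto Sᗮ (f i) : EuclideanSpace ℝ (Fin M)) = _
    rw [hdecomp, map_add, Submodule.coe_add,
      Submodule.orthogonalProjectionOnto_apply_of_mem_orthogonal
        (S.le_orthogonal_orthogonal hp_mem),
      ← Submodule.starProjection_apply, Submodule.starProjection_eq_self_iff.mpr hq_perp]
    simp
  have hnormu : ‖u i‖ = 1 := by
    have h1 := huu i i
    rw [if_pos rfl] at h1
    have h2 : ‖u i‖ ^ 2 = 1 := by
      rw [← real_inner_self_eq_norm_sq, h1]
    nlinarith [norm_nonneg (u i)]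
  refine ⟨?_, ?_⟩
  · intro a hind
    have hx : projPerp f i (toE ((G.transpose).mulVec (fun t => (a t : ℝ)))) ≠ 0 := by
      intro h0
      set x : EuclideanSpace ℝ (Fin M) := toE ((G.transpose).mulVec (fun t => (a t : ℝ)))
        with hxdef
      have h0' : (Submodule.orthogonalProjectionOnto Sᗮ x : EuclideanSpace ℝ (Fin M)) = 0 := h0
      have hxS : x ∈ S := by
        have h1 := Submodule.orthogonalProjectionOnto_eq_zero_iff.mp (ZeroMemClass.coe_eq_zero.mp h0')
        rwa [Submodule.orthogonal_orthogonal] at h1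
      set m : (Fin M → ℝ) →ₗ[ℝ] EuclideanSpace ℝ (Fin M) :=
        eL.toLinearMap ∘ₗ (Matrix.mulVecLin G.transpose) with hmdef
      have hminj : Function.Injective m := by
        intro v w h
        have h' : G.transpose.mulVec v = G.transpose.mulVec w := by
          apply eL.injective
          exact h
        have h2 := congrArg (fun y => (G.transpose)⁻¹.mulVec y) h'
        have h3 : (G.transpose)⁻¹ * G.transpose = 1 :=
          Matrix.nonsing_inv_mul _ (by rw [Matrix.det_transpose]; exact hG)
        simpa [Matrix.mulVec_mulVec, h3] using h2
      have hxm : x = m (fun t => ((a t : ℤ) : ℝ)) := rfl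
      have hfm : ∀ j, f j = m (fun t => ((A j t : ℤ) : ℝ)) := by
        intro j; rw [hf j]; rfl
      have hcastmem : (fun t => ((a t : ℤ) : ℝ)) ∈
          Submodule.span ℝ ((fun j : Fin M => (fun t => ((A j t : ℤ) : ℝ))) '' {j | j < i}) := by
        have himg : f '' {j | j < i}
            = m '' ((fun j : Fin M => (fun t => ((A j t : ℤ) : ℝ))) '' {j | j < i}) := by
          rw [Set.image_image]; exact Set.image_congr fun j _ => hfm j
        rw [hSdef, himg, Submodule.span_image] at hxS
        obtain ⟨y, hy, hmy⟩ := hxS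
        have hya : y = fun t => ((a t : ℤ) : ℝ) := hminj (by rw [hmy, hxm])
        rwa [← hya]
      set g : Fin (i.val + 1) → (Fin M → ℝ) := fun j =>
        if h : (j : ℕ) < i.val then (fun t => ((A ⟨j, h.trans i.isLt⟩ t : ℤ) : ℝ))
        else (fun t => ((a t : ℤ) : ℝ)) with hgdef
      have hglast : g ⟨i.val, Nat.lt_succ_self _⟩ = fun t => ((a t : ℤ) : ℝ) := by
        rw [hgdef]; simp
      have hnot := hind.notMem_span_image
        (s := {k : Fin (i.val + 1) | (k : ℕ) < i.val})
        (x := ⟨i.val, Nat.lt_succ_self _⟩) (by simp)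
      have hsub : ((fun j : Fin M => (fun t => ((A j t : ℤ) : ℝ))) '' {j | j < i})
          ⊆ g '' {k : Fin (i.val + 1) | (k : ℕ) < i.val} := by
        rintro y ⟨j, hj, rfl⟩
        have hjv : (j : ℕ) < i.val := hj
        refine ⟨⟨j.val, by omega⟩, hjv, ?_⟩
        rw [hgdef]
        simp only [dif_pos hjv]
      have hmem2 : (fun t => ((a t : ℤ) : ℝ)) ∈
          Submodule.span ℝ (g '' {k : Fin (i.val + 1) | (k : ℕ) < i.val}) :=
        Submodule.span_mono hsub hcastmem
      rw [← hglast] at hmem2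
      exact hnot hmem2
    have hle := hshort a hx
    exact pow_le_pow_left₀ (norm_nonneg _) hle 2
  · rw [hproj_fi, norm_smul, hnormu, mul_one, Real.norm_eq_abs, sq_abs]
end
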